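/- If G is a labeled graph on {1,...,n} containing a configuration H2 (labels k1<k2<k3<k4 with edges {k1,k4} and {k2,k3}), then G is not degree complete: there exists a nonnegative integer vector s satisfying s_G^l ≼ s ≼ s_G^r and 0 ≤ s_i ≤ d_G(i) for all i, which is not the out-degree vector of any orientation of G. -/

import Mathlib

/-- `D` is an orientation of `G`: each edge gets exactly one direction. -/
def IsOrientation {n : ℕ} (G : SimpleGraph (Fin n)) (D : Fin n → Fin n → Bool) : Prop :=
  ∀ u v : Fin n, (G.Adj u v → D u v = !D v u) ∧ (¬ G.Adj u v → D u v = false)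

/-- Out-degree of `v` in the orientation `D`. -/
def outDeg {n : ℕ} (D : Fin n → Fin n → Bool) (v : Fin n) : ℕ :=
  (Finset.univ.filter (fun w => D v w = true)).card

/-- Partial sum of the first `k` entries of a vector indexed by `Fin n`. -/
def partialSum {n : ℕ} (s : Fin n → ℕ) (k : ℕ) : ℕ :=
  ∑ i ∈ Finset.univ.filter (fun i : Fin n => i.val < k), s i

/-- The dominance order `s ≼ t`. -/
def Preceq {n : ℕ} (s t : Fin n → ℕ) : Prop :=
  (∀ k : ℕ, k ≤ n → partialSum s k ≤ partialSum t k) ∧ partialSum s n = partialSum t n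

namespace H2Aux

lemma psum_card {n : ℕ} (D : Fin n → Fin n → Bool) (k : ℕ) :
    partialSum (outDeg D) k =
      (Finset.univ.filter (fun p : Fin n × Fin n => p.1.val < k ∧ D p.1 p.2 = true)).card := by
  classical
  rw [partialSum, Finset.card_filter, Fintype.sum_prod_type, Finset.sum_filter]
  refine Finset.sum_congr rfl fun i _ => ?_
  by_cases h : (i : ℕ) < k
  · rw [if_pos h, outDeg, Finset.card_filter]
    exact Finset.sum_congr rfl fun w _ => by simp [h]
  · rw [if_neg h]
    symm
    refine Finset.sum_eq_zero fun w _ => by simp [h]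

lemma injOn_swapfun {n : ℕ} (D D' : Fin n → Fin n → Bool)
    (hanti : ∀ u v, D u v = true → ¬ D v u = true) (S : Finset (Fin n × Fin n))
    (hS : ∀ p ∈ S, D p.1 p.2 = true) :
    Set.InjOn (fun p : Fin n × Fin n => if D' p.1 p.2 then p else p.swap) S := by
  intro p hp q hq h
  simp only [Finset.mem_coe] at hp hq
  have hp1 := hS p hp
  have hq1 := hS q hq
  by_cases a : D' p.1 p.2 <;> by_cases b : D' q.1 q.2 <;> simp only [a, b, if_true, if_false] at h
  · exact h
  · simp only [h, Prod.fst_swap, Prod.snd_swap] at hp1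
    exact absurd hq1 (hanti _ _ hp1)
  · simp only [← h, Prod.fst_swap, Prod.snd_swap] at hq1
    exact absurd hp1 (hanti _ _ hq1)
  · have := congrArg Prod.swap h; simpa using this

lemma card_le_pairs {n : ℕ} (k : ℕ) (D D' : Fin n → Fin n → Bool)
    (hanti : ∀ u v, D u v = true → ¬ D v u = true)
    (himg : ∀ u v : Fin n, u.val < k → D u v = true →
      (D' u v = true ∨ (D' v u = true ∧ v.val < k))) :
    (Finset.univ.filter (fun p : Fin n × Fin n => p.1.val < k ∧ D p.1 p.2 = true)).card ≤
    (Finset.univ.filter (fun p : Fin n × Fin n => p.1.val < k ∧ D' p.1 p.2 = true)).card := by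
  classical
  apply Finset.card_le_card_of_injOn (fun p => if D' p.1 p.2 then p else p.swap)
  · intro p hp
    simp only [Finset.mem_coe, Finset.mem_filter, Finset.mem_univ, true_and] at hp ⊢
    obtain ⟨hpk, hpD⟩ := hp
    rcases himg _ _ hpk hpD with h1 | ⟨h1, h2⟩
    · simp [h1, hpk]
    · by_cases hd : D' p.1 p.2
      · simp [hd, hpk]
      · simp [hd, h1, h2]
  · exact injOn_swapfun D D' hanti _ (fun p hp => (Finset.mem_filter.mp hp).2.2)

lemma card_lt_pairs {n : ℕ} (k : ℕ) (D D' : Fin n → Fin n → Bool)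
    (hanti : ∀ u v, D u v = true → ¬ D v u = true)
    (himg : ∀ u v : Fin n, u.val < k → D u v = true →
      (D' u v = true ∨ (D' v u = true ∧ v.val < k)))
    (z : Fin n × Fin n)
    (hz : z ∈ Finset.univ.filter (fun p : Fin n × Fin n => p.1.val < k ∧ D' p.1 p.2 = true))
    (hmiss : ∀ p ∈ Finset.univ.filter
        (fun p : Fin n × Fin n => p.1.val < k ∧ D p.1 p.2 = true), p ≠ z ∧ p.swap ≠ z) :
    (Finset.univ.filter (fun p : Fin n × Fin n => p.1.val < k ∧ D p.1 p.2 = true)).card + 1 ≤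
    (Finset.univ.filter (fun p : Fin n × Fin n => p.1.val < k ∧ D' p.1 p.2 = true)).card := by
  classical
  set T := Finset.univ.filter (fun p : Fin n × Fin n => p.1.val < k ∧ D' p.1 p.2 = true) with hT
  have h1 : (Finset.univ.filter
      (fun p : Fin n × Fin n => p.1.val < k ∧ D p.1 p.2 = true)).card ≤ (T.erase z).card := by
    apply Finset.card_le_card_of_injOn (fun p => if D' p.1 p.2 then p else p.swap)
    · intro p hp
      have hm := hmiss p hp
      simp only [Finset.mem_coe, Finset.mem_filter, Finset.mem_univ, true_and] at hp ⊢
      obtain ⟨hpk, hpD⟩ := hp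
      apply Finset.mem_erase.mpr
      constructor
      · by_cases hd : D' p.1 p.2 <;> simp [hd, hm.1, hm.2]
      · rcases himg _ _ hpk hpD with h1 | ⟨h1, h2⟩
        · simp [hT, h1, hpk]
        · by_cases hd : D' p.1 p.2
          · simp [hT, hd, hpk]
          · simp [hT, hd, h1, h2]
    · exact injOn_swapfun D D' hanti _ (fun p hp => (Finset.mem_filter.mp hp).2.2)
  have h2 : (T.erase z).card = T.card - 1 := Finset.card_erase_of_mem hz
  have h3 : 1 ≤ T.card := Finset.card_pos.mpr ⟨z, hz⟩
  omega

def DD {n : ℕ} (G : SimpleGraph (Fin n)) [DecidableRel G.Adj] (a b : Fin n) :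
    Fin n → Fin n → Bool := fun u v =>
  decide (G.Adj u v ∧ (u = a ∨ (u = b ∧ v ≠ a) ∨ (u ≠ a ∧ u ≠ b ∧ v ≠ a ∧ v ≠ b ∧ v < u)))

variable {n : ℕ} (G : SimpleGraph (Fin n)) [DecidableRel G.Adj] (a b : Fin n)

lemma DD_adj {u v : Fin n} (h : DD G a b u v = true) : G.Adj u v := by
  simp only [DD, decide_eq_true_eq] at h; exact h.1

lemma DD_anti (u v : Fin n) (h : DD G a b u v = true) : ¬ DD G a b v u = true := by
  simp only [DD, decide_eq_true_eq] at h ⊢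
  obtain ⟨hadj, hc⟩ := h
  have hne : u ≠ v := G.ne_of_adj hadj
  rintro ⟨-, hc'⟩
  rcases hc with h1 | ⟨h1, h2⟩ | ⟨h1, h2, h3, h4, h5⟩ <;>
    rcases hc' with g1 | ⟨g1, g2⟩ | ⟨g1, g2, g3, g4, g5⟩
  · exact hne (h1.trans g1.symm)
  · exact g2 h1
  · exact g3 h1
  · exact h2 g1
  · exact hne (h1.trans g1.symm)
  · exact g4 h1
  · exact h3 g1
  · exact h4 g1
  · exact absurd h5 (lt_asymm g5)

lemma DD_total {u v : Fin n} (h : G.Adj u v) :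
    DD G a b u v = true ∨ DD G a b v u = true := by
  simp only [DD, decide_eq_true_eq]
  have hne : u ≠ v := G.ne_of_adj h
  have h' : G.Adj v u := h.symm
  by_cases hua : u = a
  · exact Or.inl ⟨h, Or.inl hua⟩
  by_cases hva : v = a
  · exact Or.inr ⟨h', Or.inl hva⟩
  by_cases hub : u = b
  · exact Or.inl ⟨h, Or.inr (Or.inl ⟨hub, hva⟩)⟩
  by_cases hvb : v = b
  · exact Or.inr ⟨h', Or.inr (Or.inl ⟨hvb, hua⟩)⟩
  rcases lt_or_gt_of_ne hne with hlt | hgt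
  · exact Or.inr ⟨h', Or.inr (Or.inr ⟨hva, hvb, hua, hub, hlt⟩)⟩
  · exact Or.inl ⟨h, Or.inr (Or.inr ⟨hua, hub, hva, hvb, hgt⟩)⟩

lemma DD_fst (v : Fin n) : DD G a b a v = true ↔ G.Adj a v := by
  simp only [DD, decide_eq_true_eq]
  constructor
  · exact fun h => h.1
  · intro h; exact ⟨h, by tauto⟩

lemma DD_snd (hba : b ≠ a) (v : Fin n) : DD G a b b v = true ↔ (G.Adj b v ∧ v ≠ a) := by
  simp only [DD, decide_eq_true_eq]
  constructor
  · rintro ⟨hadj, hc⟩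
    refine ⟨hadj, ?_⟩
    rcases hc with h1 | ⟨-, h2⟩ | ⟨-, h1, -, -, -⟩
    · exact absurd h1 hba
    · exact h2
    · exact absurd rfl h1
  · rintro ⟨hadj, hva⟩
    exact ⟨hadj, by tauto⟩

lemma DD_other {u v : Fin n} (hua : u ≠ a) (hub : u ≠ b) (hva : v ≠ a) (hvb : v ≠ b)
    (hadj : G.Adj u v) (hlt : v < u) : DD G a b u v = true := by
  simp only [DD, decide_eq_true_eq]
  exact ⟨hadj, Or.inr (Or.inr ⟨hua, hub, hva, hvb, hlt⟩)⟩

end H2Aux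

open H2Aux

theorem not_degreeComplete_of_H2 {n : ℕ} (G : SimpleGraph (Fin n)) [DecidableRel G.Adj]
    (h : ∃ k1 k2 k3 k4 : Fin n, k1 < k2 ∧ k2 < k3 ∧ k3 < k4 ∧
      G.Adj k1 k4 ∧ G.Adj k2 k3) :
    ∃ s : Fin n → ℕ,
      Preceq (outDeg (fun u v => decide (G.Adj u v ∧ v < u))) s ∧
      Preceq s (outDeg (fun u v => decide (G.Adj u v ∧ u < v))) ∧
      (∀ i : Fin n, s i ≤ G.degree i) ∧
      ¬ ∃ D : Fin n → Fin n → Bool, IsOrientation G D ∧ ∀ i : Fin n, outDeg D i = s i := by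
  classical
  obtain ⟨k1, k2, k3, k4, h12, h23, h34, hA14, hA23⟩ := h
  -- basic distinctness facts
  have h13 : k1 < k3 := lt_trans h12 h23
  have h14 : k1 < k4 := lt_trans h13 h34
  have h24 : k2 < k4 := lt_trans h23 h34
  set D1 : Fin n → Fin n → Bool := DD G k1 k4 with hD1def
  set Dl : Fin n → Fin n → Bool := fun u v => decide (G.Adj u v ∧ v < u) with hDl
  set Dr : Fin n → Fin n → Bool := fun u v => decide (G.Adj u v ∧ u < v) with hDr
  -- outDeg facts about D1
  have hd1 : outDeg D1 k1 = G.degree k1 := by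
    rw [outDeg, SimpleGraph.degree]
    congr 1
    ext w
    simp [hD1def, DD_fst, SimpleGraph.mem_neighborFinset]
  have hd4 : outDeg D1 k4 + 1 = G.degree k4 := by
    have hfil : Finset.univ.filter (fun w => D1 k4 w = true)
        = (G.neighborFinset k4).erase k1 := by
      ext w
      simp only [hD1def, Finset.mem_filter, Finset.mem_univ, true_and, Finset.mem_erase,
        SimpleGraph.mem_neighborFinset, DD_snd G k1 k4 h14.ne']
      tauto
    rw [outDeg, hfil, SimpleGraph.degree]
    exact Finset.card_erase_add_one (by simpa [SimpleGraph.mem_neighborFinset] using hA14.symm)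
  have hd3 : 1 ≤ outDeg D1 k3 := by
    rw [outDeg]
    refine Finset.card_pos.mpr ⟨k2, ?_⟩
    simp only [Finset.mem_filter, Finset.mem_univ, true_and, hD1def]
    exact DD_other G k1 k4 h13.ne' h34.ne h12.ne' h24.ne hA23.symm h23
  have hdle : ∀ i, outDeg D1 i ≤ G.degree i := by
    intro i
    rw [outDeg, SimpleGraph.degree]
    apply Finset.card_le_card
    intro w hw
    simp only [Finset.mem_filter, Finset.mem_univ, true_and, hD1def] at hw
    exact (SimpleGraph.mem_neighborFinset _ _ _).mpr (DD_adj G k1 k4 hw)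
  -- the vector s
  set s : Fin n → ℕ := fun i =>
    if i = k4 then outDeg D1 k4 + 1 else if i = k3 then outDeg D1 k3 - 1 else outDeg D1 i
    with hsdef
  have hs1 : s k1 = G.degree k1 := by
    simp only [hsdef, if_neg h14.ne, if_neg h13.ne]
    exact hd1
  have hs4 : s k4 = G.degree k4 := by
    simp only [hsdef, if_pos rfl]
    exact hd4
  -- pointwise key identity
  have key : ∀ i, s i + (if i = k3 then 1 else 0) = outDeg D1 i + (if i = k4 then 1 else 0) := by
    intro i
    by_cases h4 : i = k4
    · subst h4
      simp [hsdef, h34.ne']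
    · by_cases h3 : i = k3
      · simp only [hsdef, if_neg h4, if_pos h3]
        rw [h3]
        omega
      · simp [hsdef, h4, h3]
  -- partial sum relation
  have rel : ∀ k : ℕ, partialSum s k + (if (k3 : ℕ) < k then 1 else 0)
      = partialSum (outDeg D1) k + (if (k4 : ℕ) < k then 1 else 0) := by
    intro k
    have hsum : ∑ i ∈ Finset.univ.filter (fun i : Fin n => i.val < k),
          (s i + if i = k3 then 1 else 0)
        = ∑ i ∈ Finset.univ.filter (fun i : Fin n => i.val < k),
          (outDeg D1 i + if i = k4 then 1 else 0) :=
      Finset.sum_congr rfl fun i _ => key i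
    rw [Finset.sum_add_distrib, Finset.sum_add_distrib, Finset.sum_ite_eq',
      Finset.sum_ite_eq'] at hsum
    simpa only [partialSum, Finset.mem_filter, Finset.mem_univ, true_and] using hsum
  -- antisymmetry facts
  have hanti_l : ∀ u v : Fin n, Dl u v = true → ¬ Dl v u = true := by
    intro u v h1 h2
    simp only [hDl, decide_eq_true_eq] at h1 h2
    exact absurd h1.2 (lt_asymm h2.2)
  have hanti_r : ∀ u v : Fin n, Dr u v = true → ¬ Dr v u = true := by
    intro u v h1 h2
    simp only [hDr, decide_eq_true_eq] at h1 h2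
    exact absurd h1.2 (lt_asymm h2.2)
  have hanti_1 : ∀ u v : Fin n, D1 u v = true → ¬ D1 v u = true := by
    intro u v h1; exact DD_anti G k1 k4 u v h1
  -- comparison: Dl vs D1
  have L1 : ∀ k : ℕ, partialSum (outDeg Dl) k ≤ partialSum (outDeg D1) k := by
    intro k
    rw [psum_card, psum_card]
    apply card_le_pairs k Dl D1 hanti_l
    intro u v hu hD
    simp only [hDl, decide_eq_true_eq] at hD
    have hv : (v : ℕ) < k := lt_trans hD.2 hu
    rcases DD_total G k1 k4 hD.1 with h1 | h1
    · exact Or.inl h1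
    · exact Or.inr ⟨h1, hv⟩
  -- strict comparison on the middle range
  have L2 : ∀ k : ℕ, (k3 : ℕ) < k → ¬ (k4 : ℕ) < k →
      partialSum (outDeg Dl) k + 1 ≤ partialSum (outDeg D1) k := by
    intro k hk3 hk4
    rw [psum_card, psum_card]
    apply card_lt_pairs k Dl D1 hanti_l ?_ (k1, k4)
    · simp only [Finset.mem_filter, Finset.mem_univ, true_and]
      constructor
      · exact lt_trans (show (k1:ℕ) < (k3:ℕ) from h13) hk3
      · simp only [hD1def]
        exact (DD_fst G k1 k4 k4).mpr hA14
    · intro p hp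
      simp only [Finset.mem_filter, Finset.mem_univ, true_and, hDl, decide_eq_true_eq] at hp
      obtain ⟨hpk, -, hplt⟩ := hp
      have hp1 : (p.1 : ℕ) < k := hpk
      have hp2 : (p.2 : ℕ) < k := lt_trans hplt hp1
      have hkk4 : k ≤ (k4 : ℕ) := not_lt.mp hk4
      constructor
      · intro hcon
        have : p.2 = k4 := by rw [hcon]
        omega
      · intro hcon
        have : p.1 = k4 := by
          have := congrArg Prod.snd hcon
          simpa using this
        omega
    · intro u v hu hD
      simp only [hDl, decide_eq_true_eq] at hD
      have hv : (v : ℕ) < k := lt_trans hD.2 hu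
      rcases DD_total G k1 k4 hD.1 with h1 | h1
      · exact Or.inl h1
      · exact Or.inr ⟨h1, hv⟩
  -- comparison: D1 vs Dr
  have U1 : ∀ k : ℕ, partialSum (outDeg D1) k ≤ partialSum (outDeg Dr) k := by
    intro k
    rw [psum_card, psum_card]
    apply card_le_pairs k D1 Dr hanti_1
    intro u v hu hD
    have hadj := DD_adj G k1 k4 (hD1def ▸ hD)
    rcases lt_or_gt_of_ne (G.ne_of_adj hadj) with hlt | hgt
    · exact Or.inl (by simp only [hDr, decide_eq_true_eq]; exact ⟨hadj, hlt⟩)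
    · exact Or.inr ⟨by simp only [hDr, decide_eq_true_eq]; exact ⟨hadj.symm, hgt⟩,
        lt_trans hgt hu⟩
  -- equalities at n
  have E1 : partialSum (outDeg D1) n = partialSum (outDeg Dl) n := by
    apply le_antisymm
    · rw [psum_card, psum_card]
      apply card_le_pairs n D1 Dl hanti_1
      intro u v _ hD
      have hadj := DD_adj G k1 k4 (hD1def ▸ hD)
      rcases lt_or_gt_of_ne (G.ne_of_adj hadj) with hlt | hgt
      · exact Or.inr ⟨by simp only [hDl, decide_eq_true_eq]; exact ⟨hadj.symm, hlt⟩, v.isLt⟩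
      · exact Or.inl (by simp only [hDl, decide_eq_true_eq]; exact ⟨hadj, hgt⟩)
    · exact L1 n
  have E2 : partialSum (outDeg D1) n = partialSum (outDeg Dr) n := by
    apply le_antisymm
    · exact U1 n
    · rw [psum_card, psum_card]
      apply card_le_pairs n Dr D1 hanti_r
      intro u v _ hD
      simp only [hDr, decide_eq_true_eq] at hD
      rcases DD_total G k1 k4 hD.1 with h1 | h1
      · exact Or.inl h1
      · exact Or.inr ⟨h1, v.isLt⟩
  have hk34 : (k3 : ℕ) < (k4 : ℕ) := h34
  refine ⟨s, ⟨?_, ?_⟩, ⟨?_, ?_⟩, ?_, ?_⟩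
  · -- lower dominance inequalities
    intro k hk
    have hrel := rel k
    have hL := L1 k
    by_cases h4 : (k4 : ℕ) < k
    · have h3 : (k3 : ℕ) < k := lt_trans hk34 h4
      rw [if_pos h3, if_pos h4] at hrel
      omega
    · by_cases h3 : (k3 : ℕ) < k
      · have := L2 k h3 h4
        rw [if_pos h3, if_neg h4] at hrel
        omega
      · rw [if_neg h3, if_neg h4] at hrel
        omega
  · -- lower equality at n
    have hrel := rel n
    rw [if_pos k3.isLt, if_pos k4.isLt] at hrel
    omega
  · -- upper dominance inequalities
    intro k hk
    have hrel := rel k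
    have hU := U1 k
    by_cases h4 : (k4 : ℕ) < k
    · have h3 : (k3 : ℕ) < k := lt_trans hk34 h4
      rw [if_pos h3, if_pos h4] at hrel
      omega
    · by_cases h3 : (k3 : ℕ) < k
      · rw [if_pos h3, if_neg h4] at hrel
        omega
      · rw [if_neg h3, if_neg h4] at hrel
        omega
  · -- upper equality at n
    have hrel := rel n
    rw [if_pos k3.isLt, if_pos k4.isLt] at hrel
    omega
  · -- degree bounds
    intro i
    by_cases h4 : i = k4
    · subst h4
      exact le_of_eq hs4
    · by_cases h3 : i = k3
      · simp only [hsdef, if_neg h4, if_pos h3]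
        rw [h3]
        have := hdle k3
        omega
      · simp only [hsdef, if_neg h4, if_neg h3]
        exact hdle i
  · -- unrealizability
    rintro ⟨D, hD, hout⟩
    have hDadj : ∀ u v : Fin n, D u v = true → G.Adj u v := by
      intro u v hduv
      by_contra hn
      rw [(hD u v).2 hn] at hduv
      exact Bool.false_ne_true hduv
    have hfull : ∀ x : Fin n, outDeg D x = G.degree x →
        ∀ y : Fin n, G.Adj x y → D x y = true := by
      intro x hx y hy
      have hsub : Finset.univ.filter (fun w => D x w = true) ⊆ G.neighborFinset x := by
        intro w hw
        simp only [Finset.mem_filter, Finset.mem_univ, true_and] at hw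
        exact (SimpleGraph.mem_neighborFinset _ _ _).mpr (hDadj _ _ hw)
      have hcard : (G.neighborFinset x).card ≤
          (Finset.univ.filter (fun w => D x w = true)).card := by
        rw [← outDeg, hx, SimpleGraph.degree]
      have heq := Finset.eq_of_subset_of_card_le hsub hcard
      have : y ∈ Finset.univ.filter (fun w => D x w = true) := by
        rw [heq]
        exact (SimpleGraph.mem_neighborFinset _ _ _).mpr hy
      simpa using this
    have hD14 : D k1 k4 = true := hfull k1 ((hout k1).trans hs1) k4 hA14
    have hD41 : D k4 k1 = true := hfull k4 ((hout k4).trans hs4) k1 hA14.symm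
    have := (hD k1 k4).1 hA14
    rw [hD14, hD41] at this
    simp at this
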